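/- arXiv:0908.4468 — 5 statements merged into one kernel-verified Lean document; each statement's English description precedes it below -/
import Mathlib

section
/- If g : [0,∞) → [0,∞) is of strictly sublinear growth (i.e. g(x)/x → 0 as x → ∞), then its smallest concave majorant ḡ is also of strictly sublinear growth. -/
open Filter

/-- If `g : [0,∞) → [0,∞)` is of strictly sublinear growth, then its smallest
concave majorant `ḡ` is also of strictly sublinear growth. -/
theorem smallest_concave_majorant_strictly_sublinear
    (g gbar : ℝ → ℝ)
    (hg_nonneg : ∀ x, 0 ≤ x → 0 ≤ g x)
    (hg_sublinear : Tendsto (fun x => g x / x) atTop (nhds 0))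
    (h_concave : ConcaveOn ℝ (Set.Ici (0:ℝ)) gbar)
    (h_major : ∀ x, 0 ≤ x → g x ≤ gbar x)
    (h_smallest : ∀ h : ℝ → ℝ, ConcaveOn ℝ (Set.Ici (0:ℝ)) h →
      (∀ x, 0 ≤ x → g x ≤ h x) → ∀ x, 0 ≤ x → gbar x ≤ h x) :
    Tendsto (fun x => gbar x / x) atTop (nhds 0) := by
  have hgbar_nonneg : ∀ x, 0 ≤ x → 0 ≤ gbar x := fun x hx =>
    le_trans (hg_nonneg x hx) (h_major x hx)
  rw [Metric.tendsto_atTop] at hg_sublinear ⊢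
  intro ε hε
  obtain ⟨M₀, hM₀⟩ := hg_sublinear (ε/2) (half_pos hε)
  set M : ℝ := max M₀ 1 with hMdef
  have hM1 : (1:ℝ) ≤ M := le_max_right _ _
  have hM0 : (0:ℝ) < M := lt_of_lt_of_le one_pos hM1
  -- for x ≥ M, g x ≤ (ε/2) * x
  have hg_lin : ∀ x, M ≤ x → g x ≤ ε/2 * x := by
    intro x hx
    have hxpos : (0:ℝ) < x := lt_of_lt_of_le hM0 hx
    have := hM₀ x (le_trans (le_max_left _ _) hx)
    rw [Real.dist_eq, sub_zero] at this
    have h2 : g x / x < ε/2 := lt_of_le_of_lt (le_abs_self _) this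
    have := (div_lt_iff₀ hxpos).mp h2
    linarith
  set C : ℝ := 2 * (|gbar M| + |gbar (2*M)|) with hCdef
  have hC0 : 0 ≤ C := by positivity
  -- gbar is bounded by C on [0, M]
  have hub : ∀ x, 0 ≤ x → x ≤ M → gbar x ≤ C := by
    intro x hx0 hxM
    have hden : (0:ℝ) < 2*M - x := by linarith
    set t : ℝ := M / (2*M - x) with htdef
    have ht0 : 0 ≤ t := by positivity
    have ht1 : t ≤ 1 := by
      rw [div_le_one hden]; linarith
    have ht_half : 1/2 ≤ t := by
      rw [htdef, le_div_iff₀ hden]; linarith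
    have hcomb := h_concave.2 (Set.mem_Ici.mpr hx0)
      (Set.mem_Ici.mpr (by positivity : (0:ℝ) ≤ 2*M)) ht0
      (by linarith : (0:ℝ) ≤ 1 - t) (by ring)
    have harg : t • x + (1-t) • (2*M) = M := by
      simp only [smul_eq_mul, htdef]
      have hne : 2*M - x ≠ 0 := ne_of_gt hden
      have e : M / (2*M - x) * (2*M - x) = M := div_mul_cancel₀ M hne
      linear_combination -e
    rw [harg] at hcomb
    simp only [smul_eq_mul] at hcomb
    -- t * gbar x + (1-t) * gbar (2M) ≤ gbar M
    have h1 : gbar M ≤ |gbar M| := le_abs_self _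
    have h2 : -|gbar (2*M)| ≤ gbar (2*M) := neg_abs_le _
    have hx_nonneg : 0 ≤ gbar x := hgbar_nonneg x hx0
    nlinarith [mul_nonneg (by linarith : (0:ℝ) ≤ 2*t - 1) hx_nonneg,
      mul_le_mul_of_nonneg_left h2 (by linarith : (0:ℝ) ≤ 1 - t),
      mul_le_of_le_one_left (abs_nonneg (gbar (2*M))) (by linarith : 1 - t ≤ 1)]
  -- gbar x ≤ C + (ε/2) x for all x ≥ 0
  have hmaj : ∀ x, 0 ≤ x → gbar x ≤ C + ε/2 * x := by
    have hconc : ConcaveOn ℝ (Set.Ici (0:ℝ)) (fun x => C + ε/2 * x) := by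
      refine ⟨convex_Ici 0, ?_⟩
      intro a _ b _ p q hp hq hpq
      simp only [smul_eq_mul]
      nlinarith [hpq]
    have hdom : ∀ x, 0 ≤ x → g x ≤ C + ε/2 * x := by
      intro x hx0
      rcases le_total x M with h | h
      · have := le_trans (h_major x hx0) (hub x hx0 h)
        nlinarith
      · have := hg_lin x h
        linarith
    exact h_smallest _ hconc hdom
  refine ⟨max M (2*C/ε + 1), fun x hx => ?_⟩
  have hxM : M ≤ x := le_trans (le_max_left _ _) hx
  have hxC : 2*C/ε + 1 ≤ x := le_trans (le_max_right _ _) hx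
  have hxpos : (0:ℝ) < x := lt_of_lt_of_le hM0 hxM
  rw [Real.dist_eq, sub_zero, abs_of_nonneg (div_nonneg (hgbar_nonneg x hxpos.le) hxpos.le)]
  rw [div_lt_iff₀ hxpos]
  have h1 : gbar x ≤ C + ε/2 * x := hmaj x hxpos.le
  have h2 : 2*C/ε + 1 ≤ x := hxC
  have h3 : C < ε/2 * x := by
    have : ε * (2*C/ε) = 2*C := by field_simp
    nlinarith
  linarith
end

section
/- The function u(x,t) = x·(1 − 2Φ(−1/(xσ√(T−t)))) satisfies the partial differential equation u_t + (1/2)σ²x⁴u_{xx} = 0 for all x > 0 and t < T, where Φ is the standard normal cumulative distribution function. -/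
open Real

/-- The standard normal cumulative distribution function. -/
noncomputable def stdNormalCDF (z : ℝ) : ℝ :=
  ∫ s in Set.Iic z, (2 * π) ^ (-(1:ℝ)/2) * exp (-s ^ 2 / 2)

/-- The standard normal density. -/
noncomputable def gaussD (z : ℝ) : ℝ := (2 * π) ^ (-(1:ℝ)/2) * exp (-z ^ 2 / 2)

lemma gaussD_cont : Continuous gaussD := by
  unfold gaussD; continuity

lemma gaussD_integrable : MeasureTheory.Integrable gaussD := by
  have h := (integrable_exp_neg_mul_sq (by norm_num : (0:ℝ) < 1/2)).const_mul
      ((2 * π) ^ (-(1:ℝ)/2))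
  refine h.congr ?_
  filter_upwards with s
  unfold gaussD
  ring_nf

lemma gaussD_hasDeriv (z : ℝ) : HasDerivAt gaussD (-z * gaussD z) z := by
  have h := (((hasDerivAt_pow 2 z).neg.div_const 2).exp).const_mul ((2 * π) ^ (-(1:ℝ)/2))
  simp only [Pi.neg_def] at h
  refine h.congr_deriv ?_
  unfold gaussD
  ring

lemma cdf_hasDeriv (z : ℝ) : HasDerivAt stdNormalCDF (gaussD z) z := by
  have key : stdNormalCDF = fun z => stdNormalCDF 0 + ∫ s in (0:ℝ)..z, gaussD s := by
    funext w
    have h := intervalIntegral.integral_Iic_sub_Iic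
      (gaussD_integrable.integrableOn (s := Set.Iic 0))
      (gaussD_integrable.integrableOn (s := Set.Iic w))
    have h0 : stdNormalCDF w = ∫ s in Set.Iic w, gaussD s := rfl
    have h1 : stdNormalCDF 0 = ∫ s in Set.Iic (0:ℝ), gaussD s := rfl
    rw [h0, h1]; linarith [h]
  have hFTC : HasDerivAt (fun w => ∫ s in (0:ℝ)..w, gaussD s) (gaussD z) z :=
    intervalIntegral.integral_hasDerivAt_right (gaussD_cont.intervalIntegrable 0 z)
      (gaussD_cont.stronglyMeasurableAtFilter _ _) gaussD_cont.continuousAt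
  rw [key]
  exact hFTC.const_add _

/-- `u(x,t) = x (1 − 2Φ(−1/(xσ√(T−t))))` satisfies `u_t + σ²x⁴u_{xx}/2 = 0` for
`x > 0`, `t < T`. -/
theorem bubble_price_solves_BS (σ T : ℝ) (hσ : 0 < σ) (hT : 0 < T) :
    ∀ x t : ℝ, 0 < x → t < T →
      (deriv (fun s => x * (1 - 2 * stdNormalCDF (-(1 / (x * σ * Real.sqrt (T - s)))))) t)
      + (1/2) * σ ^ 2 * x ^ 4 *
        (deriv (deriv (fun y =>
          y * (1 - 2 * stdNormalCDF (-(1 / (y * σ * Real.sqrt (T - t))))))) x) = 0 := by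
  intro x t hx htT
  have hTt : (0:ℝ) < T - t := by linarith
  have hrpos : 0 < Real.sqrt (T - t) := Real.sqrt_pos.2 hTt
  set r := Real.sqrt (T - t) with hr
  have hrne : r ≠ 0 := ne_of_gt hrpos
  -- time derivative
  have hdenT : x * σ * r ≠ 0 := by positivity
  have h1 : HasDerivAt (fun s => T - s) (0 - 1) t := (hasDerivAt_const t T).sub (hasDerivAt_id t)
  have h2 : HasDerivAt (fun s => Real.sqrt (T - s)) (1 / (2 * r) * (0 - 1)) t :=
    (Real.hasDerivAt_sqrt (ne_of_gt hTt)).comp t h1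
  have h3 : HasDerivAt (fun s => x * σ * Real.sqrt (T - s)) ((x * σ) * (1 / (2 * r) * (0 - 1))) t :=
    h2.const_mul (x * σ)
  have h4 := (hasDerivAt_const t (1:ℝ)).div h3 hdenT
  have h5 := h4.neg
  have h6 := (cdf_hasDeriv (-(1 / (x * σ * r)))).comp t h5
  simp only [Function.comp_def, Pi.neg_def, Pi.div_def] at h6
  have h7 := ((h6.const_mul 2).const_sub 1).const_mul x
  have hTderiv := h7.deriv
  -- spatial: the first-derivative formula
  set F : ℝ → ℝ := fun y =>
    1 - 2 * stdNormalCDF (-(1 / (y * σ * r))) - 2 * gaussD (-(1 / (y * σ * r))) * (1 / (y * σ * r))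
    with hF
  have hstep1 : ∀ y : ℝ, 0 < y →
      HasDerivAt (fun y => y * (1 - 2 * stdNormalCDF (-(1 / (y * σ * r))))) (F y) y := by
    intro y hy
    have hdy : y * σ * r ≠ 0 := by positivity
    have k1 : HasDerivAt (fun y : ℝ => y * σ * r) (1 * σ * r) y :=
      ((hasDerivAt_id y).mul_const σ).mul_const r
    have k2 := (hasDerivAt_const y (1:ℝ)).div k1 hdy
    have k3 := k2.neg
    have k4 := (cdf_hasDeriv (-(1 / (y * σ * r)))).comp y k3
    simp only [Function.comp_def, Pi.neg_def, Pi.div_def] at k4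
    have k5 := (k4.const_mul 2).const_sub 1
    have k6 := (hasDerivAt_id y).mul k5
    simp only [Pi.mul_def, id] at k6
    refine k6.congr_deriv ?_
    rw [hF]
    field_simp
    ring
  -- deriv u agrees with F near x
  have hev : deriv (fun y =>
      y * (1 - 2 * stdNormalCDF (-(1 / (y * σ * r))))) =ᶠ[nhds x] F := by
    filter_upwards [Ioi_mem_nhds hx] with y hy using (hstep1 y hy).deriv
  have heq2 : deriv (deriv (fun y =>
      y * (1 - 2 * stdNormalCDF (-(1 / (y * σ * r)))))) x = deriv F x := hev.deriv_eq
  -- derivative of F at x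
  have hdx : x * σ * r ≠ 0 := by positivity
  have k1 : HasDerivAt (fun y : ℝ => y * σ * r) (1 * σ * r) x :=
    ((hasDerivAt_id x).mul_const σ).mul_const r
  have k2 := (hasDerivAt_const x (1:ℝ)).div k1 hdx
  have k3 := k2.neg
  have k4 := (cdf_hasDeriv (-(1 / (x * σ * r)))).comp x k3
  have g4 := (gaussD_hasDeriv (-(1 / (x * σ * r)))).comp x k3
  simp only [Function.comp_def, Pi.neg_def, Pi.div_def] at k4 g4
  have a1 := (k4.const_mul 2).const_sub 1
  have b1 := (g4.const_mul 2).mul k2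
  simp only [Pi.mul_def, Pi.div_def] at b1
  have hFd := (a1.sub b1).deriv
  simp only [Pi.sub_def] at hFd
  rw [hTderiv, heq2, hF, hFd]
  have hxne : x ≠ 0 := ne_of_gt hx
  have hσne : σ ≠ 0 := ne_of_gt hσ
  field_simp
  ring
end

section
/- The function v(x,t) = 2x·Φ(−1/(xσ√(T−t))) is a strictly positive classical solution of v_t + (1/2)σ²x⁴v_{xx} = 0 on (0,∞)×(0,T) which converges to 0 as t → T⁻ for each fixed x > 0 and converges to 0 as x → 0⁺ for each fixed t < T. Hence the Black–Scholes equation with this volatility admits a nonzero solution with zero terminal and zero boundary data, and uniqueness of solutions of linear growth fails. -/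
open Real Filter

section
open MeasureTheory

noncomputable def gaussPDF (z : ℝ) : ℝ := (2 * π) ^ (-(1:ℝ)/2) * exp (-z ^ 2 / 2)

lemma gaussPDF_pos (z : ℝ) : 0 < gaussPDF z := by
  unfold gaussPDF
  have h : (0:ℝ) < (2 * π) ^ (-(1:ℝ)/2) := rpow_pos_of_pos (by positivity) _
  positivity

lemma gaussPDF_cont : Continuous gaussPDF := by
  unfold gaussPDF; fun_prop

lemma gaussPDF_integrable : Integrable gaussPDF := by
  have h : Integrable (fun s : ℝ => exp (-(1/2 : ℝ) * s ^ 2)) :=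
    integrable_exp_neg_mul_sq (by norm_num)
  have h2 := h.const_mul ((2 * π) ^ (-(1:ℝ)/2))
  refine h2.congr (Eventually.of_forall fun s => ?_)
  unfold gaussPDF; ring_nf

lemma gaussPDF_hasDerivAt (z : ℝ) : HasDerivAt gaussPDF (-z * gaussPDF z) z := by
  have h1 : HasDerivAt (fun z : ℝ => -z ^ 2 / 2) (-z) z := by
    have := ((hasDerivAt_pow 2 z).neg).div_const 2
    refine this.congr_deriv ?_; push_cast; ring
  have h2 := (Real.hasDerivAt_exp (-z ^ 2 / 2)).comp z h1
  have h3 := h2.const_mul ((2 * π) ^ (-(1:ℝ)/2))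
  refine h3.congr_deriv ?_
  unfold gaussPDF; ring

lemma stdNormalCDF_eq (z : ℝ) :
    stdNormalCDF z = stdNormalCDF 0 + ∫ s in (0:ℝ)..z, gaussPDF s := by
  have h := intervalIntegral.integral_Iic_sub_Iic
    (gaussPDF_integrable.integrableOn (s := Set.Iic 0))
    (gaussPDF_integrable.integrableOn (s := Set.Iic z))
  have : stdNormalCDF z - stdNormalCDF 0 = ∫ s in (0:ℝ)..z, gaussPDF s := h
  linarith

lemma stdNormalCDF_hasDerivAt (z : ℝ) : HasDerivAt stdNormalCDF (gaussPDF z) z := by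
  have h : HasDerivAt (fun u => ∫ s in (0:ℝ)..u, gaussPDF s) (gaussPDF z) z :=
    intervalIntegral.integral_hasDerivAt_right
      (gaussPDF_integrable.intervalIntegrable)
      (gaussPDF_cont.stronglyMeasurableAtFilter _ _)
      gaussPDF_cont.continuousAt
  have h2 := h.const_add (stdNormalCDF 0)
  have : (fun u => stdNormalCDF 0 + ∫ s in (0:ℝ)..u, gaussPDF s) = stdNormalCDF := by
    funext u; exact (stdNormalCDF_eq u).symm
  rwa [this] at h2

lemma stdNormalCDF_nonneg (z : ℝ) : 0 ≤ stdNormalCDF z :=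
  setIntegral_nonneg measurableSet_Iic fun s _ => (gaussPDF_pos s).le

lemma stdNormalCDF_pos (z : ℝ) : 0 < stdNormalCDF z := by
  have h : (0:ℝ) < ∫ s in (z - 1)..z, gaussPDF s :=
    intervalIntegral.intervalIntegral_pos_of_pos
      (gaussPDF_integrable.intervalIntegrable) (fun s => gaussPDF_pos s) (by linarith)
  have h2 := stdNormalCDF_eq z
  have h3 := stdNormalCDF_eq (z - 1)
  have h4 := intervalIntegral.integral_Iic_sub_Iic
    (gaussPDF_integrable.integrableOn (s := Set.Iic (z-1)))
    (gaussPDF_integrable.integrableOn (s := Set.Iic z))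
  have h5 : stdNormalCDF z - stdNormalCDF (z-1) = ∫ s in (z-1)..z, gaussPDF s := h4
  have := stdNormalCDF_nonneg (z - 1)
  linarith

lemma stdNormalCDF_le (z : ℝ) : stdNormalCDF z ≤ ∫ s, gaussPDF s :=
  setIntegral_le_integral gaussPDF_integrable
    (Eventually.of_forall fun s => (gaussPDF_pos s).le)

lemma stdNormalCDF_tendsto_atBot : Tendsto stdNormalCDF atBot (nhds 0) := by
  have h := MeasureTheory.intervalIntegral_tendsto_integral_Iic (μ := volume)
    (f := gaussPDF) 0 (gaussPDF_integrable.integrableOn) (tendsto_id (x := atBot))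
  have heq : ∀ z : ℝ, stdNormalCDF z = stdNormalCDF 0 - ∫ s in z..(0:ℝ), gaussPDF s := by
    intro z
    have h4 : stdNormalCDF 0 - stdNormalCDF z = ∫ s in z..(0:ℝ), gaussPDF s :=
      intervalIntegral.integral_Iic_sub_Iic
        (gaussPDF_integrable.integrableOn (s := Set.Iic z))
        (gaussPDF_integrable.integrableOn (s := Set.Iic 0))
    linarith
  have h0 : (∫ s in Set.Iic (0:ℝ), gaussPDF s) = stdNormalCDF 0 := rfl
  rw [h0] at h
  have : Tendsto (fun z : ℝ => stdNormalCDF 0 - ∫ s in z..(0:ℝ), gaussPDF s) atBot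
      (nhds (stdNormalCDF 0 - stdNormalCDF 0)) := (tendsto_const_nhds).sub h
  simp only [sub_self] at this
  exact this.congr fun z => (heq z).symm

end

/-- `v(x,t) = 2xΦ(−1/(xσ√(T−t)))` is a strictly positive classical solution of
`v_t + σ²x⁴v_{xx}/2 = 0` on `(0,∞)×(0,T)` with zero terminal data as `t → T⁻` and
zero boundary data as `x → 0⁺`; hence uniqueness of solutions of linear growth to
the Black–Scholes equation fails. -/
theorem nonuniqueness_solution_BS (σ T : ℝ) (hσ : 0 < σ) (hT : 0 < T) :
    (∀ x t : ℝ, 0 < x → 0 < t → t < T →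
      0 < 2 * x * stdNormalCDF (-(1 / (x * σ * Real.sqrt (T - t))))) ∧
    (∀ x t : ℝ, 0 < x → 0 < t → t < T →
      (deriv (fun s => 2 * x * stdNormalCDF (-(1 / (x * σ * Real.sqrt (T - s))))) t)
      + (1/2) * σ ^ 2 * x ^ 4 *
        (deriv (deriv (fun y =>
          2 * y * stdNormalCDF (-(1 / (y * σ * Real.sqrt (T - t)))))) x) = 0) ∧
    (∀ x : ℝ, 0 < x →
      Tendsto (fun t : ℝ => 2 * x * stdNormalCDF (-(1 / (x * σ * Real.sqrt (T - t)))))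
        (nhdsWithin T (Set.Iio T)) (nhds 0)) ∧
    (∀ t : ℝ, t < T →
      Tendsto (fun x : ℝ => 2 * x * stdNormalCDF (-(1 / (x * σ * Real.sqrt (T - t)))))
        (nhdsWithin 0 (Set.Ioi 0)) (nhds 0)) := by
  refine ⟨?_, ?_, ?_, ?_⟩
  · intro x t hx _ _
    have := stdNormalCDF_pos (-(1 / (x * σ * Real.sqrt (T - t))))
    positivity
  · -- the PDE
    intro x t hx ht htT
    have hg : (0:ℝ) < T - t := by linarith
    set r := Real.sqrt (T - t) with hr_def
    have hr : 0 < r := Real.sqrt_pos.mpr hg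
    -- time derivative
    have hin : HasDerivAt (fun s : ℝ => T - s) (-1) t := by
      simpa using (hasDerivAt_id t).const_sub T
    have hsq : HasDerivAt (fun s : ℝ => Real.sqrt (T - s)) (-(1 / (2 * r))) t := by
      have h := (Real.hasDerivAt_sqrt (ne_of_gt hg)).comp t hin
      refine h.congr_deriv ?_
      rw [← hr_def]; ring
    have hu : HasDerivAt (fun s : ℝ => x * σ * Real.sqrt (T - s)) (x * σ * -(1 / (2 * r))) t :=
      hsq.const_mul (x * σ)
    have hune : x * σ * r ≠ 0 := by positivity
    have hwt : HasDerivAt (fun s : ℝ => -(1 / (x * σ * Real.sqrt (T - s))))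
        (-(1 / (2 * x * σ * r ^ 3))) t := by
      have h1 := (hu.inv hune).neg
      simp only [one_div]
      refine h1.congr_deriv ?_
      rw [← hr_def]
      field_simp
    have hvt : HasDerivAt (fun s => 2 * x * stdNormalCDF (-(1 / (x * σ * Real.sqrt (T - s)))))
        (2 * x * (gaussPDF (-(1 / (x * σ * r))) * -(1 / (2 * x * σ * r ^ 3)))) t := by
      exact ((stdNormalCDF_hasDerivAt _).comp t hwt).const_mul (2 * x)
    -- spatial derivatives
    have hF' : ∀ y : ℝ, 0 < y →
        HasDerivAt (fun y => 2 * y * stdNormalCDF (-(1 / (y * σ * r))))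
          (2 * stdNormalCDF (-(1 / (y * σ * r)))
            + 2 * gaussPDF (-(1 / (y * σ * r))) / (σ * r * y)) y := by
      intro y hy
      have hu : HasDerivAt (fun y : ℝ => y * σ * r) (σ * r) y := by
        have h : HasDerivAt (fun y : ℝ => y * (σ * r)) (σ * r) y := hasDerivAt_mul_const _
        simpa [← mul_assoc] using h
      have hune : y * σ * r ≠ 0 := by positivity
      have hw : HasDerivAt (fun y : ℝ => -(1 / (y * σ * r))) (1 / (σ * r * y ^ 2)) y := by
        have h1 := (hu.inv hune).neg
        simp only [one_div]
        refine h1.congr_deriv ?_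
        field_simp
      have hΦ := (stdNormalCDF_hasDerivAt _).comp y hw
      have h2 : HasDerivAt (fun y : ℝ => 2 * y) 2 y := by
        simpa using (hasDerivAt_id y).const_mul 2
      have h3 := h2.mul hΦ
      refine h3.congr_deriv ?_
      simp only [Function.comp_apply]
      field_simp
    have hV1 : HasDerivAt (fun y => 2 * stdNormalCDF (-(1 / (y * σ * r)))
          + 2 * gaussPDF (-(1 / (y * σ * r))) / (σ * r * y))
        (2 * gaussPDF (-(1 / (x * σ * r))) / (σ ^ 3 * r ^ 3 * x ^ 4)) x := by
      have hu : HasDerivAt (fun y : ℝ => y * σ * r) (σ * r) x := by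
        have h : HasDerivAt (fun y : ℝ => y * (σ * r)) (σ * r) x := hasDerivAt_mul_const _
        simpa [← mul_assoc] using h
      have hune : x * σ * r ≠ 0 := by positivity
      have hw : HasDerivAt (fun y : ℝ => -(1 / (y * σ * r))) (1 / (σ * r * x ^ 2)) x := by
        have h1 := (hu.inv hune).neg
        simp only [one_div]
        refine h1.congr_deriv ?_
        field_simp
      have hΦ : HasDerivAt (fun y => 2 * stdNormalCDF (-(1 / (y * σ * r))))
          (2 * (gaussPDF (-(1 / (x * σ * r))) * (1 / (σ * r * x ^ 2)))) x :=
        ((stdNormalCDF_hasDerivAt _).comp x hw).const_mul 2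
      have hnum : HasDerivAt (fun y => 2 * gaussPDF (-(1 / (y * σ * r))))
          (2 * (-(-(1 / (x * σ * r))) * gaussPDF (-(1 / (x * σ * r))) * (1 / (σ * r * x ^ 2)))) x :=
        ((gaussPDF_hasDerivAt _).comp x hw).const_mul 2
      have hden : HasDerivAt (fun y : ℝ => σ * r * y) (σ * r) x := by
        simpa using (hasDerivAt_id x).const_mul (σ * r)
      have hdenne : σ * r * x ≠ 0 := by positivity
      have h4 := hnum.div hden hdenne
      have h5 := hΦ.add h4
      refine h5.congr_deriv ?_
      field_simp
      ring
    have hEq : deriv (fun y => 2 * y * stdNormalCDF (-(1 / (y * σ * r)))) =ᶠ[nhds x]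
        (fun y => 2 * stdNormalCDF (-(1 / (y * σ * r)))
          + 2 * gaussPDF (-(1 / (y * σ * r))) / (σ * r * y)) := by
      filter_upwards [isOpen_Ioi.mem_nhds hx] with y hy using (hF' y hy).deriv
    have hd2 : deriv (deriv (fun y => 2 * y * stdNormalCDF (-(1 / (y * σ * r))))) x
        = 2 * gaussPDF (-(1 / (x * σ * r))) / (σ ^ 3 * r ^ 3 * x ^ 4) := by
      rw [hEq.deriv_eq, hV1.deriv]
    rw [hvt.deriv, hd2]
    field_simp
    ring
  · -- t → T⁻
    intro x hx
    have h2 : Tendsto (fun t : ℝ => x * σ * Real.sqrt (T - t)) (nhdsWithin T (Set.Iio T))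
        (nhdsWithin 0 (Set.Ioi 0)) := by
      rw [tendsto_nhdsWithin_iff]
      constructor
      · have hc : Continuous fun t : ℝ => x * σ * Real.sqrt (T - t) := by fun_prop
        have := (hc.tendsto T).mono_left (nhdsWithin_le_nhds (s := Set.Iio T))
        simpa using this
      · filter_upwards [self_mem_nhdsWithin] with t ht
        have : (0:ℝ) < T - t := by simpa using sub_pos.mpr (Set.mem_Iio.mp ht)
        have : 0 < Real.sqrt (T - t) := Real.sqrt_pos.mpr this
        exact Set.mem_Ioi.mpr (by positivity)
    have h3 : Tendsto (fun t : ℝ => -(1 / (x * σ * Real.sqrt (T - t))))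
        (nhdsWithin T (Set.Iio T)) atBot := by
      simp only [one_div]
      exact (tendsto_neg_atTop_atBot).comp (tendsto_inv_nhdsGT_zero.comp h2)
    have h4 := stdNormalCDF_tendsto_atBot.comp h3
    have := h4.const_mul (2 * x)
    simpa using this
  · -- x → 0⁺
    intro t _
    apply squeeze_zero'
    · filter_upwards [self_mem_nhdsWithin] with x hx
      have := stdNormalCDF_nonneg (-(1 / (x * σ * Real.sqrt (T - t))))
      have hx' : (0:ℝ) < x := hx
      positivity
    · filter_upwards [self_mem_nhdsWithin] with x hx
      have h1 := stdNormalCDF_le (-(1 / (x * σ * Real.sqrt (T - t))))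
      have hx' : (0:ℝ) < x := hx
      calc 2 * x * stdNormalCDF (-(1 / (x * σ * Real.sqrt (T - t))))
          ≤ 2 * x * ∫ s, gaussPDF s := by
            apply mul_le_mul_of_nonneg_left h1 (by positivity)
        _ = (2 * ∫ s, gaussPDF s) * x := by ring
    · have hc : Continuous fun x : ℝ => (2 * ∫ s, gaussPDF s) * x := by fun_prop
      have := (hc.tendsto 0).mono_left (nhdsWithin_le_nhds (s := Set.Ioi 0))
      simpa using this
end

section
/- Let a : [0,∞)×[0,T] → [0,∞) be continuous. Suppose v : [0,∞)×[0,T] → ℝ is continuous, is C^{2,1} on (0,∞)×(0,T], satisfies v_t = (1/2)a(x,t)²v_{xx} there, satisfies v(x,0) = 0 for all x ≥ 0 and v(0,t) = 0 for all t ∈ [0,T], and is of strictly sublinear growth, i.e. |v(x,t)| ≤ f(x) for some f with f(x)/x → 0 as x → ∞. Then v ≡ 0. -/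
open Filter Set

/-- Second derivative test: at an interior local max, the second derivative is ≤ 0. -/
lemma second_deriv_test_aux {g g' : ℝ → ℝ} {c x₀ : ℝ}
    (hmax : IsLocalMax g x₀)
    (hg : ∀ᶠ x in nhds x₀, HasDerivAt g (g' x) x)
    (hg'' : HasDerivAt g' c x₀) : c ≤ 0 := by
  by_contra hc
  push_neg at hc
  have hg0 : HasDerivAt g (g' x₀) x₀ := hg.self_of_nhds
  have hd0 : g' x₀ = 0 := by
    have h := hmax.deriv_eq_zero
    rwa [hg0.deriv] at h
  have hslope : Tendsto (slope g' x₀) (nhdsWithin x₀ (Ioi x₀)) (nhds c) :=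
    (hasDerivAt_iff_tendsto_slope.mp hg'').mono_left
      (nhdsWithin_mono _ (fun x hx => ne_of_gt hx))
  have h1 : ∀ᶠ x in nhdsWithin x₀ (Ioi x₀), 0 < g' x := by
    filter_upwards [hslope.eventually (eventually_gt_nhds hc), self_mem_nhdsWithin]
      with x hx hx'
    rw [slope_def_field, hd0, sub_zero] at hx
    have hxpos : 0 < x - x₀ := sub_pos.mpr hx'
    have := mul_pos hx hxpos
    rw [div_mul_cancel₀] at this
    · exact this
    · exact ne_of_gt hxpos
  have h2 : ∀ᶠ x in nhdsWithin x₀ (Ioi x₀), HasDerivAt g (g' x) x :=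
    hg.filter_mono nhdsWithin_le_nhds
  have h3 : ∀ᶠ x in nhdsWithin x₀ (Ioi x₀), g x ≤ g x₀ :=
    hmax.filter_mono nhdsWithin_le_nhds
  obtain ⟨u, hu, hsub⟩ := mem_nhdsGT_iff_exists_Ioo_subset.mp ((h1.and (h2.and h3)) : _)
  set b := (x₀ + u) / 2 with hb
  have hbmem : b ∈ Ioo x₀ u := ⟨by simp [hb]; linarith [mem_Ioi.mp hu], by simp [hb]; linarith [mem_Ioi.mp hu]⟩
  have hcont : ContinuousOn g (Icc x₀ b) := by
    intro x hx
    rcases eq_or_lt_of_le hx.1 with h | h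
    · exact (h ▸ hg0).continuousAt.continuousWithinAt
    · exact ((hsub ⟨h, lt_of_le_of_lt hx.2 hbmem.2⟩).2.1).continuousAt.continuousWithinAt
  obtain ⟨ξ, hξ, hξeq⟩ := exists_hasDerivAt_eq_slope g g' hbmem.1 hcont
    (fun x hx => (hsub ⟨hx.1, lt_trans hx.2 hbmem.2⟩).2.1)
  have hξpos : 0 < g' ξ := (hsub ⟨hξ.1, lt_trans hξ.2 hbmem.2⟩).1
  have hble : g b ≤ g x₀ := (hsub hbmem).2.2
  rw [hξeq] at hξpos
  have hden : 0 < b - x₀ := sub_pos.mpr hbmem.1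
  have : 0 < g b - g x₀ := by
    have := (div_pos_iff.mp hξpos)
    rcases this with ⟨h,_⟩|⟨_,h⟩ <;> linarith
  linarith

/-- If `g` has a one-sided max from the left at `t₀` and a genuine derivative there,
the derivative is nonnegative. -/
lemma left_max_deriv_nonneg_aux {g : ℝ → ℝ} {g' t₀ : ℝ} (hd : HasDerivAt g g' t₀)
    (hmax : ∀ᶠ t in nhdsWithin t₀ (Iio t₀), g t ≤ g t₀) : 0 ≤ g' := by
  have hslope : Tendsto (slope g t₀) (nhdsWithin t₀ (Iio t₀)) (nhds g') :=
    (hasDerivAt_iff_tendsto_slope.mp hd).mono_left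
      (nhdsWithin_mono _ (fun x hx => ne_of_lt hx))
  refine ge_of_tendsto hslope ?_
  filter_upwards [hmax, self_mem_nhdsWithin] with t h1 h2
  rw [slope_def_field]
  have ht : t - t₀ < 0 := sub_neg.mpr (mem_Iio.mp h2)
  apply div_nonneg_iff.mpr
  right
  exact ⟨by linarith, le_of_lt ht⟩

lemma BS_one_sided
    (T : ℝ) (hT : 0 < T)
    (a : ℝ → ℝ → ℝ)
    (v vt vx vxx : ℝ → ℝ → ℝ)
    (hv_cont : ContinuousOn (fun p : ℝ × ℝ => v p.1 p.2) (Set.Ici 0 ×ˢ Set.Icc 0 T))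
    (hvt : ∀ x ∈ Set.Ioi (0:ℝ), ∀ t ∈ Set.Ioc (0:ℝ) T,
      HasDerivAt (fun s => v x s) (vt x t) t)
    (hvx : ∀ x ∈ Set.Ioi (0:ℝ), ∀ t ∈ Set.Ioc (0:ℝ) T,
      HasDerivAt (fun y => v y t) (vx x t) x)
    (hvxx : ∀ x ∈ Set.Ioi (0:ℝ), ∀ t ∈ Set.Ioc (0:ℝ) T,
      HasDerivAt (fun y => vx y t) (vxx x t) x)
    (hpde : ∀ x ∈ Set.Ioi (0:ℝ), ∀ t ∈ Set.Ioc (0:ℝ) T,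
      vt x t = (1/2) * (a x t) ^ 2 * vxx x t)
    (hinit : ∀ x, 0 ≤ x → v x 0 = 0)
    (hbdry : ∀ t ∈ Set.Icc (0:ℝ) T, v 0 t = 0)
    (f : ℝ → ℝ)
    (hgrowth : ∀ x, 0 ≤ x → ∀ t ∈ Set.Icc (0:ℝ) T, |v x t| ≤ f x)
    (hf_sublinear : Tendsto (fun x => f x / x) atTop (nhds 0)) :
    ∀ x, 0 ≤ x → ∀ t ∈ Set.Icc (0:ℝ) T, v x t ≤ 0 := by
  have key : ∀ ε : ℝ, 0 < ε → ∀ x, 0 ≤ x → ∀ t ∈ Set.Icc (0:ℝ) T,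
      v x t ≤ ε * Real.exp t * (1 + x) := by
    intro ε hε
    -- choose R large
    obtain ⟨N, hN⟩ := (eventually_atTop).mp
      (hf_sublinear.eventually (eventually_abs_sub_lt 0 hε))
    set R : ℝ := max N 1 with hR
    have hR1 : (1:ℝ) ≤ R := le_max_right _ _
    have hR0 : (0:ℝ) < R := lt_of_lt_of_le one_pos hR1
    have hfR : ∀ x, R ≤ x → f x ≤ ε * x := by
      intro x hx
      have hx0 : (0:ℝ) < x := lt_of_lt_of_le hR0 hx
      have h := hN x (le_trans (le_max_left _ _) hx)
      rw [sub_zero] at h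
      have h2 : f x / x < ε := lt_of_le_of_lt (le_abs_self _) h
      have := (div_lt_iff₀ hx0).mp h2
      linarith
    -- maximum principle on K = [0,R]×[0,T]
    set F : ℝ × ℝ → ℝ := fun p => v p.1 p.2 - ε * Real.exp p.2 * (1 + p.1) with hF
    set K : Set (ℝ × ℝ) := Set.Icc 0 R ×ˢ Set.Icc 0 T with hK
    have hKsub : K ⊆ Set.Ici 0 ×ˢ Set.Icc 0 T :=
      Set.prod_mono Set.Icc_subset_Ici_self subset_rfl
    have hFcont : ContinuousOn F K := by
      apply ContinuousOn.sub (hv_cont.mono hKsub)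
      exact Continuous.continuousOn (by fun_prop)
    obtain ⟨⟨x₀, t₀⟩, hp₀, hismax⟩ := (isCompact_Icc.prod isCompact_Icc).exists_isMaxOn
      ⟨(0, 0), by constructor <;> constructor <;> simp [hR0.le, hT.le]⟩ hFcont
    obtain ⟨hx₀Icc, ht₀Icc⟩ := (Set.mem_prod).mp hp₀
    simp only at hx₀Icc ht₀Icc
    have hF0 : F (x₀, t₀) ≤ 0 := by
      by_contra hpos
      push_neg at hpos
      have hFval : F (x₀, t₀) = v x₀ t₀ - ε * Real.exp t₀ * (1 + x₀) := rfl
      rw [hFval] at hpos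
      have hexp0 : (0:ℝ) < Real.exp t₀ := Real.exp_pos _
      have ht0pos : 0 < t₀ := by
        rcases eq_or_lt_of_le ht₀Icc.1 with h | h
        · exfalso
          rw [← h, hinit x₀ hx₀Icc.1, Real.exp_zero] at hpos
          nlinarith [hx₀Icc.1]
        · exact h
      have hx0pos : 0 < x₀ := by
        rcases eq_or_lt_of_le hx₀Icc.1 with h | h
        · exfalso
          rw [← h, hbdry t₀ ht₀Icc] at hpos
          nlinarith
        · exact h
      have hx0lt : x₀ < R := by
        rcases eq_or_lt_of_le hx₀Icc.2 with h | h
        · exfalso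
          have hv1 : v x₀ t₀ ≤ f x₀ := le_trans (le_abs_self _) (hgrowth x₀ hx₀Icc.1 t₀ ht₀Icc)
          have hv2 : f x₀ ≤ ε * x₀ := hfR x₀ (le_of_eq h.symm)
          have hexp1 : (1:ℝ) ≤ Real.exp t₀ := Real.one_le_exp ht₀Icc.1
          have hkey : ε * (1 + x₀) * 1 ≤ ε * (1 + x₀) * Real.exp t₀ :=
            mul_le_mul_of_nonneg_left hexp1 (by nlinarith [hx₀Icc.1])
          nlinarith
        · exact h
      have ht₀Ioc : t₀ ∈ Set.Ioc (0:ℝ) T := ⟨ht0pos, ht₀Icc.2⟩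
      -- second derivative in x is ≤ 0 at the max
      have hvxx_le : vxx x₀ t₀ ≤ 0 := by
        refine second_deriv_test_aux (g := fun y => v y t₀ - ε * Real.exp t₀ * (1 + y))
          (g' := fun y => vx y t₀ - ε * Real.exp t₀) (x₀ := x₀) ?_ ?_ ?_
        · filter_upwards [Ioo_mem_nhds hx0pos hx0lt] with y hy
          have hmem : (y, t₀) ∈ K := Set.mk_mem_prod ⟨hy.1.le, hy.2.le⟩ ht₀Icc
          exact hismax hmem
        · filter_upwards [Ioo_mem_nhds hx0pos hx0lt] with y hy
          exact (hvx y hy.1 t₀ ht₀Ioc).sub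
            (by simpa using ((hasDerivAt_id y).const_add (1:ℝ)).const_mul (ε * Real.exp t₀))
        · exact (hvxx x₀ hx0pos t₀ ht₀Ioc).sub_const _
      -- time derivative ≥ 0 at the max
      have hvt_ge : ε * Real.exp t₀ * (1 + x₀) ≤ vt x₀ t₀ := by
        have hd : HasDerivAt (fun t => v x₀ t - ε * Real.exp t * (1 + x₀))
            (vt x₀ t₀ - ε * Real.exp t₀ * (1 + x₀)) t₀ :=
          (hvt x₀ hx0pos t₀ ht₀Ioc).sub
            (((Real.hasDerivAt_exp t₀).const_mul ε).mul_const (1 + x₀))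
        have h0 := left_max_deriv_nonneg_aux hd ?_
        · linarith
        · filter_upwards [Ioo_mem_nhdsLT_of_mem (Set.mem_Ioc.mpr ⟨ht0pos, le_refl _⟩)]
            with t ht
          have hmem : (x₀, t) ∈ K :=
            Set.mk_mem_prod hx₀Icc ⟨ht.1.le, le_trans ht.2.le ht₀Icc.2⟩
          exact hismax hmem
      have hpde0 := hpde x₀ hx0pos t₀ ht₀Ioc
      have hvtle : vt x₀ t₀ ≤ 0 := by
        rw [hpde0]
        exact mul_nonpos_iff.mpr (Or.inl ⟨by positivity, hvxx_le⟩)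
      nlinarith [mul_pos (mul_pos hε hexp0) (show (0:ℝ) < 1 + x₀ by linarith)]
    -- conclude on [0,R] and on [R,∞)
    intro x hx t ht
    rcases le_or_gt x R with hxR | hxR
    · have hmem : (x, t) ∈ K := Set.mk_mem_prod ⟨hx, hxR⟩ ht
      have := le_trans (hismax hmem) hF0
      simp only [hF] at this
      linarith
    · have hv1 : v x t ≤ f x := le_trans (le_abs_self _) (hgrowth x hx t ht)
      have hv2 : f x ≤ ε * x := hfR x hxR.le
      have hexp1 : (1:ℝ) ≤ Real.exp t := Real.one_le_exp ht.1
      have hkey : ε * (1 + x) * 1 ≤ ε * (1 + x) * Real.exp t :=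
        mul_le_mul_of_nonneg_left hexp1 (by nlinarith)
      nlinarith
  intro x hx t ht
  have hC : (0:ℝ) < Real.exp T * (1 + x) := by positivity
  have : ∀ δ : ℝ, 0 < δ → v x t ≤ 0 + δ := by
    intro δ hδ
    have h := key (δ / (Real.exp T * (1 + x))) (by positivity) x hx t ht
    have hexple : Real.exp t ≤ Real.exp T := Real.exp_le_exp.mpr ht.2
    have h1 : Real.exp t * (1 + x) ≤ Real.exp T * (1 + x) := by nlinarith
    have h2 : δ / (Real.exp T * (1 + x)) * (Real.exp t * (1 + x)) ≤
        δ / (Real.exp T * (1 + x)) * (Real.exp T * (1 + x)) :=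
      mul_le_mul_of_nonneg_left h1 (by positivity)
    rw [div_mul_cancel₀ _ (ne_of_gt hC)] at h2
    calc v x t ≤ δ / (Real.exp T * (1 + x)) * Real.exp t * (1 + x) := h
      _ = δ / (Real.exp T * (1 + x)) * (Real.exp t * (1 + x)) := by ring
      _ ≤ δ := h2
      _ = 0 + δ := by ring
  exact le_of_forall_pos_le_add this

open Filter


/-- Uniqueness for the Black–Scholes equation in the class of functions of
strictly sublinear growth: a continuous solution of `v_t = a²v_{xx}/2` on
`(0,∞)×(0,T]` with zero initial and boundary data which is of strictly sublinear
growth vanishes identically. -/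
theorem BS_uniqueness_strictly_sublinear
    (T : ℝ) (hT : 0 < T)
    (a : ℝ → ℝ → ℝ)
    (ha_cont : ContinuousOn (fun p : ℝ × ℝ => a p.1 p.2) (Set.Ici 0 ×ˢ Set.Icc 0 T))
    (ha_nonneg : ∀ x ∈ Set.Ici (0:ℝ), ∀ t ∈ Set.Icc (0:ℝ) T, 0 ≤ a x t)
    (v vt vx vxx : ℝ → ℝ → ℝ)
    (hv_cont : ContinuousOn (fun p : ℝ × ℝ => v p.1 p.2) (Set.Ici 0 ×ˢ Set.Icc 0 T))
    (hvt : ∀ x ∈ Set.Ioi (0:ℝ), ∀ t ∈ Set.Ioc (0:ℝ) T,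
      HasDerivAt (fun s => v x s) (vt x t) t)
    (hvx : ∀ x ∈ Set.Ioi (0:ℝ), ∀ t ∈ Set.Ioc (0:ℝ) T,
      HasDerivAt (fun y => v y t) (vx x t) x)
    (hvxx : ∀ x ∈ Set.Ioi (0:ℝ), ∀ t ∈ Set.Ioc (0:ℝ) T,
      HasDerivAt (fun y => vx y t) (vxx x t) x)
    (hpde : ∀ x ∈ Set.Ioi (0:ℝ), ∀ t ∈ Set.Ioc (0:ℝ) T,
      vt x t = (1/2) * (a x t) ^ 2 * vxx x t)
    (hinit : ∀ x, 0 ≤ x → v x 0 = 0)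
    (hbdry : ∀ t ∈ Set.Icc (0:ℝ) T, v 0 t = 0)
    (f : ℝ → ℝ) (hf_nonneg : ∀ x, 0 ≤ x → 0 ≤ f x)
    (hgrowth : ∀ x, 0 ≤ x → ∀ t ∈ Set.Icc (0:ℝ) T, |v x t| ≤ f x)
    (hf_sublinear : Tendsto (fun x => f x / x) atTop (nhds 0)) :
    ∀ x, 0 ≤ x → ∀ t ∈ Set.Icc (0:ℝ) T, v x t = 0 := by
  have h1 := BS_one_sided T hT a v vt vx vxx hv_cont hvt hvx hvxx hpde hinit hbdry
    f hgrowth hf_sublinear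
  have h2 := BS_one_sided T hT a (fun x t => -(v x t)) (fun x t => -(vt x t))
    (fun x t => -(vx x t)) (fun x t => -(vxx x t))
    (by exact hv_cont.neg)
    (fun x hx t ht => (hvt x hx t ht).neg)
    (fun x hx t ht => (hvx x hx t ht).neg)
    (fun x hx t ht => (hvxx x hx t ht).neg)
    (fun x hx t ht => by show -(vt x t) = 1/2 * a x t ^ 2 * -(vxx x t); rw [hpde x hx t ht]; ring)
    (fun x hx => by show -(v x 0) = 0; rw [hinit x hx]; ring)
    (fun t ht => by show -(v 0 t) = 0; rw [hbdry t ht]; ring)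
    f
    (fun x hx t ht => by rw [abs_neg]; exact hgrowth x hx t ht)
    hf_sublinear
  intro x hx t ht
  have ha := h1 x hx t ht
  have hb := h2 x hx t ht
  simp only [neg_nonpos] at hb
  linarith
end

section
/- Let ε > 0, η > 2 and 0 < β < 1, and choose η' ∈ (2, η). Then there exist m > 1 and constants c > 0, M ≥ 1 such that for all x ≥ c and all t ∈ [0,T], M x + (ε/2)(1+β)β x^{β−1+η}(T−t)^m + (ε/2)β(1−β)x^{2β−1+η}(T−t)^{2m} ≥ m x^{β+1}(T−t)^{m−1} + m x^{2β+1}(T−t)^{2m−1}. -/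
/-- The key algebraic inequality (15) used in the strict local martingale
criterion: for `ε > 0`, `η > 2`, `0 < β < 1` and `η' ∈ (2, η)`, there exist
`m > 1`, `c > 0` and `M ≥ 1` such that the supersolution inequality holds for
all `x ≥ c` and `t ∈ [0,T]`. -/
theorem supersolution_inequality (T : ℝ) (hT : 0 < T)
    (ε η β η' : ℝ) (hε : 0 < ε) (hη : 2 < η) (hβ0 : 0 < β) (hβ1 : β < 1)
    (hη'1 : 2 < η') (hη'2 : η' < η) :
    ∃ m : ℝ, 1 < m ∧ ∃ c : ℝ, 0 < c ∧ ∃ M : ℝ, 1 ≤ M ∧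
      ∀ x : ℝ, c ≤ x → ∀ t ∈ Set.Icc (0:ℝ) T,
        M * x + (ε/2) * (1+β) * β * x ^ (β - 1 + η) * (T - t) ^ m
          + (ε/2) * β * (1-β) * x ^ (2*β - 1 + η) * (T - t) ^ (2*m)
        ≥ m * x ^ (β + 1) * (T - t) ^ (m - 1)
          + m * x ^ (2*β + 1) * (T - t) ^ (2*m - 1) := by
  have hη'2pos : 0 < η' - 2 := by linarith
  have hηη' : 0 < η - η' := by linarith
  set m : ℝ := 2 + β / (η' - 2) with hm
  have hdivpos : 0 < β / (η' - 2) := div_pos hβ0 hη'2pos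
  have hm1 : 1 < m := by rw [hm]; linarith
  have hmpos : 0 < m := by linarith
  set K : ℝ := ε / 2 * β * (1 - β) with hK
  have hKpos : 0 < K := by
    have h1 : 0 < ε / 2 := by linarith
    have h2 : 0 < 1 - β := by linarith
    rw [hK]; positivity
  set C2 : ℝ := ε / 2 * (1 + β) * β with hC2
  have hC2pos : 0 < C2 := by
    have h1 : 0 < ε / 2 := by linarith
    have h2 : 0 < 1 + β := by linarith
    rw [hC2]; positivity
  have hKC2 : K ≤ C2 := by rw [hK, hC2]; nlinarith
  have hmKpos : 0 < m / K := div_pos hmpos hKpos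
  set c : ℝ := max 1 ((m / K) ^ (1 / (η - η')) : ℝ) with hc
  refine ⟨m, hm1, c, lt_of_lt_of_le one_pos (le_max_left _ _), 2 * m, by linarith, ?_⟩
  intro x hx t ht
  obtain ⟨ht0, htT⟩ := ht
  have hx1 : 1 ≤ x := le_trans (le_max_left _ _) hx
  have hx0 : 0 < x := lt_of_lt_of_le one_pos hx1
  set s : ℝ := T - t with hs
  have hs0 : 0 ≤ s := by rw [hs]; linarith
  -- key inequality: K * x^(η-η') ≥ m
  have hkey : m ≤ K * x ^ (η - η') := by
    have h1 : (m / K) ^ (1 / (η - η')) ≤ x := le_trans (le_max_right _ _) hx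
    have h2 : ((m / K) ^ (1 / (η - η'))) ^ (η - η') ≤ x ^ (η - η') :=
      Real.rpow_le_rpow (Real.rpow_nonneg hmKpos.le _) h1 hηη'.le
    rw [← Real.rpow_mul hmKpos.le, one_div, inv_mul_cancel₀ (ne_of_gt hηη'),
      Real.rpow_one] at h2
    have hmk : m = K * (m / K) := by field_simp
    rw [hmk]
    exact mul_le_mul_of_nonneg_left h2 hKpos.le
  have hxee : 0 < x ^ (η - η') := Real.rpow_pos_of_pos hx0 _
  have hkey2 : m ≤ C2 * x ^ (η - η') := by nlinarith
  have hxb1 : 0 < x ^ (β + 1) := Real.rpow_pos_of_pos hx0 _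
  have hxb2 : 0 < x ^ (2 * β + 1) := Real.rpow_pos_of_pos hx0 _
  have hxA : 0 < x ^ (β - 1 + η) := Real.rpow_pos_of_pos hx0 _
  have hxB : 0 < x ^ (2 * β - 1 + η) := Real.rpow_pos_of_pos hx0 _
  have hx2η' : 0 < x ^ (2 - η') := Real.rpow_pos_of_pos hx0 _
  have hsm1 : 0 ≤ s ^ (m - 1) := Real.rpow_nonneg hs0 _
  have hsm2 : 0 ≤ s ^ (2 * m - 1) := Real.rpow_nonneg hs0 _
  rcases le_or_gt (x ^ (2 - η')) s with hcase | hcase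
  · -- Case A : s ≥ x^(2-η') > 0
    have hspos : 0 < s := lt_of_lt_of_le hx2η' hcase
    have hsne : s ≠ 0 := ne_of_gt hspos
    -- first term
    have ex1 : x ^ (β - 1 + η) * x ^ (2 - η') = x ^ (β + 1) * x ^ (η - η') := by
      rw [← Real.rpow_add hx0, ← Real.rpow_add hx0]; ring_nf
    have es1 : s ^ m = s ^ (m - 1) * s := by
      have hme : m = (m - 1) + 1 := by ring
      rw [hme, Real.rpow_add_one hsne]; ring_nf
    have T1 : m * x ^ (β + 1) * s ^ (m - 1) ≤ C2 * x ^ (β - 1 + η) * s ^ m := by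
      have step1 : m * x ^ (β + 1) ≤ C2 * (x ^ (β - 1 + η) * x ^ (2 - η')) := by
        rw [ex1]
        calc m * x ^ (β + 1) ≤ (C2 * x ^ (η - η')) * x ^ (β + 1) :=
              mul_le_mul_of_nonneg_right hkey2 hxb1.le
          _ = C2 * (x ^ (β + 1) * x ^ (η - η')) := by ring
      have step2 := mul_le_mul_of_nonneg_right step1 hsm1
      have step3 : C2 * (x ^ (β - 1 + η) * x ^ (2 - η')) * s ^ (m - 1)
          ≤ C2 * x ^ (β - 1 + η) * (s ^ (m - 1) * s) := by
        calc C2 * (x ^ (β - 1 + η) * x ^ (2 - η')) * s ^ (m - 1)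
            = (C2 * x ^ (β - 1 + η) * s ^ (m - 1)) * x ^ (2 - η') := by ring
          _ ≤ (C2 * x ^ (β - 1 + η) * s ^ (m - 1)) * s :=
              mul_le_mul_of_nonneg_left hcase (by positivity)
          _ = C2 * x ^ (β - 1 + η) * (s ^ (m - 1) * s) := by ring
      rw [es1]
      linarith
    -- second term
    have ex2 : x ^ (2 * β - 1 + η) * x ^ (2 - η') = x ^ (2 * β + 1) * x ^ (η - η') := by
      rw [← Real.rpow_add hx0, ← Real.rpow_add hx0]; ring_nf
    have es2 : s ^ (2 * m) = s ^ (2 * m - 1) * s := by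
      have hme : 2 * m = (2 * m - 1) + 1 := by ring
      rw [hme, Real.rpow_add_one hsne]; ring_nf
    have T2 : m * x ^ (2 * β + 1) * s ^ (2 * m - 1) ≤ K * x ^ (2 * β - 1 + η) * s ^ (2 * m) := by
      have step1 : m * x ^ (2 * β + 1) ≤ K * (x ^ (2 * β - 1 + η) * x ^ (2 - η')) := by
        rw [ex2]
        calc m * x ^ (2 * β + 1) ≤ (K * x ^ (η - η')) * x ^ (2 * β + 1) :=
              mul_le_mul_of_nonneg_right hkey hxb2.le
          _ = K * (x ^ (2 * β + 1) * x ^ (η - η')) := by ring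
      have step2 := mul_le_mul_of_nonneg_right step1 hsm2
      have step3 : K * (x ^ (2 * β - 1 + η) * x ^ (2 - η')) * s ^ (2 * m - 1)
          ≤ K * x ^ (2 * β - 1 + η) * (s ^ (2 * m - 1) * s) := by
        calc K * (x ^ (2 * β - 1 + η) * x ^ (2 - η')) * s ^ (2 * m - 1)
            = (K * x ^ (2 * β - 1 + η) * s ^ (2 * m - 1)) * x ^ (2 - η') := by ring
          _ ≤ (K * x ^ (2 * β - 1 + η) * s ^ (2 * m - 1)) * s :=
              mul_le_mul_of_nonneg_left hcase (by positivity)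
          _ = K * x ^ (2 * β - 1 + η) * (s ^ (2 * m - 1) * s) := by ring
      rw [es2]
      linarith
    have hMx : 0 ≤ 2 * m * x := by positivity
    linarith
  · -- Case B : s ≤ x^(2-η')
    have hcase' : s ≤ x ^ (2 - η') := hcase.le
    -- first term: m * x^(β+1) * s^(m-1) ≤ m * x
    have hme1 : 0 ≤ m - 1 := by linarith
    have hb1 : s ^ (m - 1) ≤ x ^ ((2 - η') * (m - 1)) := by
      rw [Real.rpow_mul hx0.le]
      exact Real.rpow_le_rpow hs0 hcase' hme1
    have hexp1 : β + 1 + (2 - η') * (m - 1) ≤ 1 := by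
      have : (2 - η') * (m - 1) = (2 - η') - β := by
        rw [hm]; field_simp; ring
      rw [this]; linarith
    have hcomb1 : x ^ (β + 1) * x ^ ((2 - η') * (m - 1)) ≤ x := by
      rw [← Real.rpow_add hx0]
      calc x ^ (β + 1 + (2 - η') * (m - 1)) ≤ x ^ (1 : ℝ) :=
            Real.rpow_le_rpow_of_exponent_le hx1 hexp1
        _ = x := Real.rpow_one x
    have T1 : m * x ^ (β + 1) * s ^ (m - 1) ≤ m * x := by
      have h1 : x ^ (β + 1) * s ^ (m - 1) ≤ x ^ (β + 1) * x ^ ((2 - η') * (m - 1)) :=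
        mul_le_mul_of_nonneg_left hb1 hxb1.le
      have h2 : x ^ (β + 1) * s ^ (m - 1) ≤ x := le_trans h1 hcomb1
      calc m * x ^ (β + 1) * s ^ (m - 1) = m * (x ^ (β + 1) * s ^ (m - 1)) := by ring
        _ ≤ m * x := mul_le_mul_of_nonneg_left h2 hmpos.le
    -- second term
    have hme2 : 0 ≤ 2 * m - 1 := by linarith
    have hb2 : s ^ (2 * m - 1) ≤ x ^ ((2 - η') * (2 * m - 1)) := by
      rw [Real.rpow_mul hx0.le]
      exact Real.rpow_le_rpow hs0 hcase' hme2
    have hexp2 : 2 * β + 1 + (2 - η') * (2 * m - 1) ≤ 1 := by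
      have : (2 - η') * (2 * m - 1) = 3 * (2 - η') - 2 * β := by
        rw [hm]; field_simp; ring
      rw [this]; linarith
    have hcomb2 : x ^ (2 * β + 1) * x ^ ((2 - η') * (2 * m - 1)) ≤ x := by
      rw [← Real.rpow_add hx0]
      calc x ^ (2 * β + 1 + (2 - η') * (2 * m - 1)) ≤ x ^ (1 : ℝ) :=
            Real.rpow_le_rpow_of_exponent_le hx1 hexp2
        _ = x := Real.rpow_one x
    have T2 : m * x ^ (2 * β + 1) * s ^ (2 * m - 1) ≤ m * x := by
      have h1 : x ^ (2 * β + 1) * s ^ (2 * m - 1) ≤ x ^ (2 * β + 1) * x ^ ((2 - η') * (2 * m - 1)) :=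
        mul_le_mul_of_nonneg_left hb2 hxb2.le
      have h2 : x ^ (2 * β + 1) * s ^ (2 * m - 1) ≤ x := le_trans h1 hcomb2
      calc m * x ^ (2 * β + 1) * s ^ (2 * m - 1) = m * (x ^ (2 * β + 1) * s ^ (2 * m - 1)) := by ring
        _ ≤ m * x := mul_le_mul_of_nonneg_left h2 hmpos.le
    have hsm : 0 ≤ s ^ m := Real.rpow_nonneg hs0 _
    have hs2m : 0 ≤ s ^ (2 * m) := Real.rpow_nonneg hs0 _
    have hP1 : 0 ≤ C2 * x ^ (β - 1 + η) * s ^ m := by positivity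
    have hP2 : 0 ≤ K * x ^ (2 * β - 1 + η) * s ^ (2 * m) := by positivity
    linarith
end
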